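/- Let τ_c > 0, let t_0 ≤ t_1 ≤ ... ≤ t_k be real numbers, and let w_0,...,w_k > 0. Define g(t) = Σ_{i=0}^k w_i (t−t_i)·exp(−(t−t_i)/τ_c) for t ∈ ℝ, and set t* = τ_c + ( Σ_{i=0}^k w_i t_i exp(t_i/τ_c) ) / ( Σ_{i=0}^k w_i exp(t_i/τ_c) ). Then g′(t) = 0 if and only if t = t*, g is strictly increasing on (−∞, t*], and g is strictly decreasing on [t*, ∞); in particular t* is the unique global maximizer of g. -/

import Mathlib

open Real Set

/-- the superposition of lobes
`g(t) = Σ_{i=0}^k w_i (t - t_i) exp(-(t - t_i)/τc)` with positive weights has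
derivative vanishing exactly at
`t* = τc + (Σ w_i t_i e^{t_i/τc}) / (Σ w_i e^{t_i/τc})`; `g` is strictly
increasing on `(-∞, t*]`, strictly decreasing on `[t*, ∞)`, and `t*` is the
unique global maximizer of `g`. -/
theorem stmt_14 (τc : ℝ) (hτc : 0 < τc) (k : ℕ) (t w : ℕ → ℝ)
    (hmono : ∀ i j, i ≤ j → j ≤ k → t i ≤ t j)
    (hw : ∀ i ≤ k, 0 < w i)
    (g : ℝ → ℝ)
    (hg : ∀ x, g x = ∑ i ∈ Finset.range (k + 1),
      w i * (x - t i) * Real.exp (-(x - t i) / τc))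
    (tstar : ℝ)
    (hts : tstar = τc +
      (∑ i ∈ Finset.range (k + 1), w i * t i * Real.exp (t i / τc)) /
      (∑ i ∈ Finset.range (k + 1), w i * Real.exp (t i / τc))) :
    (∀ x, deriv g x = 0 ↔ x = tstar) ∧
    StrictMonoOn g (Iic tstar) ∧
    StrictAntiOn g (Ici tstar) ∧
    (∀ x, x ≠ tstar → g x < g tstar) := by
  have hτne : τc ≠ 0 := ne_of_gt hτc
  set A := ∑ i ∈ Finset.range (k + 1), w i * Real.exp (t i / τc) with hA
  set B := ∑ i ∈ Finset.range (k + 1), w i * t i * Real.exp (t i / τc) with hB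
  have hApos : 0 < A := by
    apply Finset.sum_pos
    · intro i hi
      have hwi := hw i (Nat.lt_succ_iff.mp (Finset.mem_range.mp hi))
      positivity
    · exact ⟨0, Finset.mem_range.mpr (Nat.succ_pos k)⟩
  have hgfun : g = fun x => (A * x - B) * Real.exp (-x / τc) := by
    funext x
    rw [hg, hA, hB, Finset.sum_mul, ← Finset.sum_sub_distrib, Finset.sum_mul]
    apply Finset.sum_congr rfl
    intro i _
    have he : Real.exp (-(x - t i) / τc) = Real.exp (t i / τc) * Real.exp (-x / τc) := by
      rw [← Real.exp_add]
      congr 1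
      field_simp
      ring
    rw [he]; ring
  have hAts : A * tstar = A * τc + B := by
    rw [hts]; field_simp
  have hd : ∀ x, HasDerivAt g (A / τc * Real.exp (-x / τc) * (tstar - x)) x := by
    intro x
    have h1 : HasDerivAt (fun y => A * y - B) A x := by
      simpa using ((hasDerivAt_id x).const_mul A).sub_const B
    have h2 : HasDerivAt (fun y : ℝ => Real.exp (-y / τc))
        (Real.exp (-x / τc) * (-1 / τc)) x := by
      have h0 : HasDerivAt (fun y : ℝ => -y / τc) (-1 / τc) x := by
        simpa using ((hasDerivAt_id x).neg.div_const τc)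
      simpa using h0.exp
    have h3 := h1.mul h2
    rw [hgfun]
    refine h3.congr_deriv ?_
    symm
    have hE : Real.exp (-x / τc) ≠ 0 := (Real.exp_pos _).ne'
    field_simp
    linear_combination hAts
  have hcont : Continuous g := by
    rw [hgfun]; continuity
  have hiff : ∀ x, deriv g x = 0 ↔ x = tstar := by
    intro x
    rw [(hd x).deriv]
    have hcoef : 0 < A / τc * Real.exp (-x / τc) := by positivity
    constructor
    · intro h
      rcases mul_eq_zero.mp h with h | h
      · exact absurd h (ne_of_gt hcoef)
      · linarith [sub_eq_zero.mp h]
    · intro h; rw [h]; ring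
  have hmono' : StrictMonoOn g (Iic tstar) := by
    apply strictMonoOn_of_deriv_pos (convex_Iic tstar) hcont.continuousOn
    intro x hx
    rw [interior_Iic] at hx
    rw [(hd x).deriv]
    have hpos : 0 < tstar - x := sub_pos.mpr hx
    positivity
  have hanti : StrictAntiOn g (Ici tstar) := by
    apply strictAntiOn_of_deriv_neg (convex_Ici tstar) hcont.continuousOn
    intro x hx
    rw [interior_Ici] at hx
    rw [(hd x).deriv]
    have h1 : tstar - x < 0 := sub_neg.mpr hx
    have h2 : 0 < A / τc * Real.exp (-x / τc) := by positivity
    nlinarith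
  refine ⟨hiff, hmono', hanti, ?_⟩
  intro x hx
  rcases lt_or_gt_of_ne hx with h | h
  · exact hmono' (mem_Iic.mpr h.le) (mem_Iic.mpr le_rfl) h
  · exact hanti (mem_Ici.mpr le_rfl) (mem_Ici.mpr h.le) h
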